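/- The map psi sending (t:u:v) to (t*v^2 : v^3 : v^2*u : -v*(t*v+u^2) : -t*(t*v+u^2)) maps points of P^2 into S, and its restriction to the affine chart {v ≠ 0} is a bijection onto S° = {x ∈ S | x1 ≠ 0}, with inverse given by x ↦ (x0 : x2 : x1). -/
import Mathlib


/-- The map `ψ : (t:u:v) ↦ (tv² : v³ : v²u : -v(tv+u²) : -t(tv+u²))` maps `ℙ²`
into `S`, and restricts to a bijection (of projective points, i.e. up to a
nonzero scalar) between the affine chart `{v ≠ 0}` and
`S° = {x ∈ S | x1 ≠ 0}`, with inverse `x ↦ (x0 : x2 : x1)`. -/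
theorem stmt_2 (k : Type*) [Field k] :
    let ψ : k → k → k → (Fin 5 → k) := fun t u v =>
      ![t * v ^ 2, v ^ 3, v ^ 2 * u, -(v * (t * v + u ^ 2)),
        -(t * (t * v + u ^ 2))]
    let inS : (Fin 5 → k) → Prop := fun x =>
      x 0 * x 3 - x 1 * x 4 = 0 ∧ x 0 * x 1 + x 1 * x 3 + (x 2) ^ 2 = 0
    -- ψ maps points of ℙ² into S
    (∀ t u v : k, inS (ψ t u v)) ∧
    -- on the chart {v ≠ 0}, the image lies in S° (x1 ≠ 0)
    (∀ t u v : k, v ≠ 0 → ψ t u v 1 ≠ 0) ∧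
    -- surjectivity onto S°: every x ∈ S with x1 ≠ 0 is proportional to some ψ(t,u,v), v ≠ 0
    (∀ x : Fin 5 → k, inS x → x 1 ≠ 0 →
      ∃ t u v : k, v ≠ 0 ∧ ∃ c : k, c ≠ 0 ∧ ψ t u v = c • x) ∧
    -- injectivity on the chart {v ≠ 0}
    (∀ t u v t' u' v' : k, v ≠ 0 → v' ≠ 0 →
      (∃ c : k, c ≠ 0 ∧ ψ t u v = c • ψ t' u' v') →
      ∃ d : k, d ≠ 0 ∧ (t, u, v) = (d * t', d * u', d * v')) ∧
    -- the inverse is x ↦ (x0 : x2 : x1)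
    (∀ t u v : k, v ≠ 0 →
      ∃ c : k, c ≠ 0 ∧
        (ψ t u v 0, ψ t u v 2, ψ t u v 1) = (c * t, c * u, c * v)) := by
  intro ψ inS
  refine ⟨?_, ?_, ?_, ?_, ?_⟩
  · intro t u v
    constructor <;> simp [ψ, inS] <;> ring
  · intro t u v hv
    simp [ψ, hv]
  · intro x hx hx1
    simp only [inS] at hx
    obtain ⟨h1, h2⟩ := hx
    refine ⟨x 0, x 2, x 1, hx1, (x 1) ^ 2, pow_ne_zero 2 hx1, ?_⟩
    funext i
    fin_cases i <;> simp [ψ, Pi.smul_apply, smul_eq_mul]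
    · ring
    · ring
    · show -(x 1 * (x 0 * x 1 + x 2 ^ 2)) = x 1 ^ 2 * x 3
      linear_combination (-(x 1)) * h2
    · show -(x 0 * (x 0 * x 1 + x 2 ^ 2)) = x 1 ^ 2 * x 4
      linear_combination (-(x 0)) * h2 + (x 1) * h1
  · intro t u v t' u' v' hv hv' ⟨c, hc, hψ⟩
    have e0 : t * v ^ 2 = c * (t' * v' ^ 2) := by
      have := congrFun hψ 0; simpa [ψ, Pi.smul_apply, smul_eq_mul] using this
    have e1 : v ^ 3 = c * v' ^ 3 := by
      have := congrFun hψ 1; simpa [ψ, Pi.smul_apply, smul_eq_mul] using this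
    have e2 : v ^ 2 * u = c * (v' ^ 2 * u') := by
      have := congrFun hψ 2; simpa [ψ, Pi.smul_apply, smul_eq_mul] using this
    have hne : v' ^ 2 * v ^ 2 ≠ 0 := mul_ne_zero (pow_ne_zero _ hv') (pow_ne_zero _ hv)
    have ht2 : t * v' = t' * v := by
      apply mul_right_cancel₀ hne
      linear_combination v' ^ 3 * e0 - t' * v' ^ 2 * e1
    have hu2 : u * v' = u' * v := by
      apply mul_right_cancel₀ hne
      linear_combination v' ^ 3 * e2 - u' * v' ^ 2 * e1
    refine ⟨v / v', div_ne_zero hv hv', ?_⟩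
    simp only [Prod.mk.injEq]
    refine ⟨?_, ?_, ?_⟩ <;> field_simp
    · linear_combination ht2
    · linear_combination hu2
  · intro t u v hv
    exact ⟨v ^ 2, pow_ne_zero 2 hv, by simp [ψ]; constructor <;> ring⟩
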